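/- Assume the coercivity condition (C), the monotonicity assumption (M) and assumption (E). For λ > 0 let v^λ = (v^λ_i)_{i∈𝕀} be the unique viscosity solution of (P_λ). Then the family (v^λ)_{λ∈(0,1)} is equi-Lipschitz continuous on 𝕋ⁿ: there exists a constant C₁ > 0 such that for every λ ∈ (0,1) and every i ∈ 𝕀 the function v^λ_i is Lipschitz continuous on 𝕋ⁿ with Lipschitz constant at most C₁. -/

import Mathlib

open MeasureTheory Filter Topology RealInnerProductSpace

noncomputable section

/-- Euclidean space ℝⁿ, the universal cover of the flat torus 𝕋ⁿ = ℝⁿ/ℤⁿ. -/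
abbrev Euc (n : ℕ) := EuclideanSpace ℝ (Fin n)

/-- A vector of ℝⁿ with integer coordinates (an element of ℤⁿ). -/
def IsIntVec {n : ℕ} (z : Euc n) : Prop := ∀ i, ∃ k : ℤ, z i = (k : ℝ)

/-- ℤⁿ-periodic functions on ℝⁿ: these represent functions on the torus 𝕋ⁿ. -/
def TorusFun {n : ℕ} {α : Type*} (f : Euc n → α) : Prop :=
  ∀ (x z : Euc n), IsIntVec z → f (x + z) = f x

/-- Functions on 𝕋ⁿ × Ξ, i.e. ℤⁿ-periodic in the first variable. -/
def TorusFun2 {n : ℕ} {Ξ : Type*} {α : Type*} (f : Euc n × Ξ → α) : Prop :=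
  ∀ (x z : Euc n) (ξ : Ξ), IsIntVec z → f (x + z, ξ) = f (x, ξ)

/-- The Hamiltonian H_{φ,i}(x,p) = sup_{ξ∈Ξ} (−g_i(x,ξ)·p − φ_i(x,ξ)). -/
def ham {n m : ℕ} {Ξ : Type*} (g : Fin m → Euc n × Ξ → Euc n)
    (φ : Fin m → Euc n × Ξ → ℝ) (i : Fin m) (x p : Euc n) : ℝ :=
  ⨆ ξ : Ξ, (-⟪g i (x, ξ), p⟫ - φ i (x, ξ))

/-- The data g = (g_i), L = (L_i) consist of continuous functions on 𝕋ⁿ × Ξ. -/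
def GoodData {n m : ℕ} {Ξ : Type*} [TopologicalSpace Ξ]
    (g : Fin m → Euc n × Ξ → Euc n) (L : Fin m → Euc n × Ξ → ℝ) : Prop :=
  (∀ i, Continuous (g i) ∧ TorusFun2 (g i)) ∧ (∀ i, Continuous (L i) ∧ TorusFun2 (L i))

/-- Coercivity (C): min_{x∈𝕋ⁿ} H_i(x,p) → ∞ as |p| → ∞. -/
def Coercive {n m : ℕ} {Ξ : Type*} (g : Fin m → Euc n × Ξ → Euc n)
    (L : Fin m → Euc n × Ξ → ℝ) : Prop :=
  ∀ (i : Fin m) (M : ℝ), ∃ R : ℝ, ∀ p : Euc n, R ≤ ‖p‖ → ∀ x : Euc n, M ≤ ham g L i x p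

/-- A monotone m×m real matrix. -/
def IsMonotoneMat {m : ℕ} (B : Matrix (Fin m) (Fin m) ℝ) : Prop :=
  ∀ (u : Fin m → ℝ) (k : Fin m), (∀ i, u i ≤ u k) → 0 ≤ u k → 0 ≤ ∑ j, B k j * u j

/-- Assumption (M): B(x) has continuous entries (as functions on 𝕋ⁿ) and is monotone
for every x. -/
def GoodCoupling {n m : ℕ} (B : Euc n → Matrix (Fin m) (Fin m) ℝ) : Prop :=
  (∀ i j, Continuous (fun x => B x i j) ∧ TorusFun (fun x => B x i j)) ∧
    ∀ x, IsMonotoneMat (B x)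

/-- Viscosity subsolution of λu + Bu + H_φ[u] = c in 𝕋ⁿ. -/
def IsSubsol {n m : ℕ} {Ξ : Type*} (B : Euc n → Matrix (Fin m) (Fin m) ℝ) (lam : ℝ)
    (g : Fin m → Euc n × Ξ → Euc n) (φ : Fin m → Euc n × Ξ → ℝ)
    (c : Fin m → ℝ) (u : Fin m → Euc n → ℝ) : Prop :=
  (∀ i, UpperSemicontinuous (u i) ∧ TorusFun (u i)) ∧
    ∀ (i : Fin m) (ψ : Euc n → ℝ), ContDiff ℝ 1 ψ → TorusFun ψ →
      ∀ x : Euc n, IsLocalMax (fun y => u i y - ψ y) x →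
        lam * u i x + (∑ j, B x i j * u j x) + ham g φ i x (gradient ψ x) ≤ c i

/-- Viscosity supersolution of λu + Bu + H_φ[u] = c in 𝕋ⁿ. -/
def IsSupersol {n m : ℕ} {Ξ : Type*} (B : Euc n → Matrix (Fin m) (Fin m) ℝ) (lam : ℝ)
    (g : Fin m → Euc n × Ξ → Euc n) (φ : Fin m → Euc n × Ξ → ℝ)
    (c : Fin m → ℝ) (u : Fin m → Euc n → ℝ) : Prop :=
  (∀ i, LowerSemicontinuous (u i) ∧ TorusFun (u i)) ∧
    ∀ (i : Fin m) (ψ : Euc n → ℝ), ContDiff ℝ 1 ψ → TorusFun ψ →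
      ∀ x : Euc n, IsLocalMin (fun y => u i y - ψ y) x →
        c i ≤ lam * u i x + (∑ j, B x i j * u j x) + ham g φ i x (gradient ψ x)

/-- Viscosity solution of λu + Bu + H_φ[u] = c in 𝕋ⁿ. -/
def IsSol {n m : ℕ} {Ξ : Type*} (B : Euc n → Matrix (Fin m) (Fin m) ℝ) (lam : ℝ)
    (g : Fin m → Euc n × Ξ → Euc n) (φ : Fin m → Euc n × Ξ → ℝ)
    (c : Fin m → ℝ) (u : Fin m → Euc n → ℝ) : Prop :=
  (∀ i, Continuous (u i)) ∧ IsSubsol B lam g φ c u ∧ IsSupersol B lam g φ c u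

/-- (φ,u) ∈ F(λ): φ ∈ C(𝕋ⁿ×Ξ)ᵐ, u ∈ C(𝕋ⁿ)ᵐ and u is a viscosity subsolution of
B^λ u + H_φ[u] = 0 in 𝕋ⁿ. -/
def memF {n m : ℕ} {Ξ : Type*} [TopologicalSpace Ξ]
    (B : Euc n → Matrix (Fin m) (Fin m) ℝ) (lam : ℝ)
    (g : Fin m → Euc n × Ξ → Euc n)
    (φ : Fin m → Euc n × Ξ → ℝ) (u : Fin m → Euc n → ℝ) : Prop :=
  (∀ i, Continuous (φ i) ∧ TorusFun2 (φ i)) ∧ (∀ i, Continuous (u i)) ∧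
    IsSubsol B lam g φ (fun _ => 0) u

/-- ρ_i(x) = Σ_j b_{ij}(x). -/
def rhoB {n m : ℕ} (B : Euc n → Matrix (Fin m) (Fin m) ℝ) (i : Fin m) (x : Euc n) : ℝ :=
  ∑ j, B x i j

/-- ν ∈ P_{B^λ}: a family of finite nonnegative Borel measures with ⟨ν, B^λ1⟩ = 1. -/
def memPB {n m : ℕ} {Ξ : Type*} [MeasurableSpace Ξ]
    (B : Euc n → Matrix (Fin m) (Fin m) ℝ) (lam : ℝ)
    (ν : Fin m → Measure (Euc n × Ξ)) : Prop :=
  (∀ i, IsFiniteMeasure (ν i)) ∧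
    (∑ i, ∫ q, (lam + rhoB B i q.1) ∂(ν i)) = 1

/-- ν ∈ G'(z,k,λ): ν ∈ P_{B^λ} and ⟨ν, φ − u_k(z) B^λ1⟩ ≥ 0 for every (φ,u) ∈ F(λ). -/
def memGP {n m : ℕ} {Ξ : Type*} [TopologicalSpace Ξ] [MeasurableSpace Ξ]
    (B : Euc n → Matrix (Fin m) (Fin m) ℝ) (lam : ℝ)
    (g : Fin m → Euc n × Ξ → Euc n) (z : Euc n) (k : Fin m)
    (ν : Fin m → Measure (Euc n × Ξ)) : Prop :=
  memPB B lam ν ∧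
    ∀ φ u, memF B lam g φ u →
      0 ≤ ∑ i, ∫ q, (φ i q - u k z * (lam + rhoB B i q.1)) ∂(ν i)

/-- μ ∈ P: a family of nonnegative Borel measures of total mass 1. -/
def memP {n m : ℕ} {Ξ : Type*} [MeasurableSpace Ξ]
    (μ : Fin m → Measure (Euc n × Ξ)) : Prop :=
  (∀ i, IsFiniteMeasure (μ i)) ∧ (∑ i, (μ i Set.univ).toReal) = 1

/-- μ ∈ P(z,k,λ): μ ∈ P and Σ_i ⟨μ_i, (λ+ρ_i)⁻¹ φ_i⟩ ≥ u_k(z) for all (φ,u) ∈ F(λ). -/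
def memPzk {n m : ℕ} {Ξ : Type*} [TopologicalSpace Ξ] [MeasurableSpace Ξ]
    (B : Euc n → Matrix (Fin m) (Fin m) ℝ) (lam : ℝ)
    (g : Fin m → Euc n × Ξ → Euc n) (z : Euc n) (k : Fin m)
    (μ : Fin m → Measure (Euc n × Ξ)) : Prop :=
  memP μ ∧
    ∀ φ u, memF B lam g φ u →
      u k z ≤ ∑ i, ∫ q, (lam + rhoB B i q.1)⁻¹ * φ i q ∂(μ i)

/-- μ ∈ P(0): μ ∈ P and ⟨μ,φ⟩ ≥ 0 for all (φ,u) ∈ F(0). -/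
def memP0 {n m : ℕ} {Ξ : Type*} [TopologicalSpace Ξ] [MeasurableSpace Ξ]
    (B : Euc n → Matrix (Fin m) (Fin m) ℝ)
    (g : Fin m → Euc n × Ξ → Euc n)
    (μ : Fin m → Measure (Euc n × Ξ)) : Prop :=
  memP μ ∧ ∀ φ u, memF B 0 g φ u → 0 ≤ ∑ i, ∫ q, φ i q ∂(μ i)

/-- μ ∈ M₊(0): a family of finite nonnegative Borel measures with ⟨μ,φ⟩ ≥ 0 for all
(φ,u) ∈ F(0). -/
def memM0 {n m : ℕ} {Ξ : Type*} [TopologicalSpace Ξ] [MeasurableSpace Ξ]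
    (B : Euc n → Matrix (Fin m) (Fin m) ℝ)
    (g : Fin m → Euc n × Ξ → Euc n)
    (μ : Fin m → Measure (Euc n × Ξ)) : Prop :=
  (∀ i, IsFiniteMeasure (μ i)) ∧ ∀ φ u, memF B 0 g φ u → 0 ≤ ∑ i, ∫ q, φ i q ∂(μ i)

/-- Assumption (E): problem (P₀) has a Lipschitz continuous viscosity solution. -/
def AssumptionE {n m : ℕ} {Ξ : Type*} (B : Euc n → Matrix (Fin m) (Fin m) ℝ)
    (g : Fin m → Euc n × Ξ → Euc n) (L : Fin m → Euc n × Ξ → ℝ) : Prop :=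
  ∃ v₀ : Fin m → Euc n → ℝ, (∀ i, ∃ K : NNReal, LipschitzWith K (v₀ i)) ∧
    IsSol B 0 g L (fun _ => 0) v₀

end


set_option maxHeartbeats 2000000

noncomputable section Aux
open Real

variable {n m : ℕ}

/-- build a Euclidean vector from coordinates -/
def eucOf {n : ℕ} (f : Fin n → ℝ) : Euc n := WithLp.toLp 2 f

lemma eucOf_apply (f : Fin n → ℝ) (j : Fin n) : eucOf f j = f j := rfl

lemma euc_add_apply (x z : Euc n) (j : Fin n) : (x + z) j = x j + z j := rfl

lemma euc_norm_sq (x : Euc n) : ‖x‖ ^ 2 = ∑ j, (x j) ^ 2 := by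
  rw [EuclideanSpace.norm_eq, Real.sq_sqrt (by positivity)]
  simp [sq_abs]

/-- shift a point into a bounded region by an integer vector -/
lemma exists_shift_bounded (x : Euc n) : ∃ z : Euc n, IsIntVec z ∧ ‖x + z‖ ≤ n := by
  refine ⟨eucOf (fun j => ((-(⌊x j⌋) : ℤ) : ℝ)), fun j => ⟨-(⌊x j⌋), rfl⟩, ?_⟩
  have h1 : ‖x + eucOf (fun j => ((-(⌊x j⌋) : ℤ) : ℝ))‖ ^ 2 ≤ (n : ℝ) := by
    rw [euc_norm_sq]
    calc ∑ j, ((x + eucOf (fun j => ((-(⌊x j⌋) : ℤ) : ℝ))) j) ^ 2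
        ≤ ∑ _j : Fin n, (1 : ℝ) := by
          refine Finset.sum_le_sum fun j _ => ?_
          have : (x + eucOf (fun j => ((-(⌊x j⌋) : ℤ) : ℝ))) j = x j - ⌊x j⌋ := by
            simp only [euc_add_apply, eucOf_apply, Int.cast_neg]; ring
          rw [this]
          have h0 : (0 : ℝ) ≤ x j - ⌊x j⌋ := sub_nonneg.2 (Int.floor_le _)
          have h1 : x j - ⌊x j⌋ ≤ 1 := by
            have := Int.lt_floor_add_one (x j); linarith
          nlinarith
      _ = (n : ℝ) := by simp
  set v := x + eucOf (fun j => ((-(⌊x j⌋) : ℤ) : ℝ)) with hv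
  rcases Nat.eq_zero_or_pos n with h0 | h0
  · subst h0
    simp [EuclideanSpace.norm_eq]
  · have h1n : (1:ℝ) ≤ n := by exact_mod_cast h0
    have hns : ‖v‖ = Real.sqrt (‖v‖ ^ 2) := (Real.sqrt_sq (norm_nonneg _)).symm
    rw [hns, Real.sqrt_le_left (Nat.cast_nonneg n)]
    nlinarith

/-- shift a point so all coordinates lie in [-1/2, 1/2] -/
lemma exists_shift_half (x : Euc n) : ∃ z : Euc n, IsIntVec z ∧ ∀ j, |(x + z) j| ≤ 1/2 := by
  refine ⟨eucOf (fun j => ((-(round (x j)) : ℤ) : ℝ)), fun j => ⟨-(round (x j)), rfl⟩, fun j => ?_⟩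
  have : (x + eucOf (fun j => ((-(round (x j)) : ℤ) : ℝ))) j = x j - round (x j) := by
    simp only [euc_add_apply, eucOf_apply, Int.cast_neg]; ring
  rw [this]
  exact (abs_sub_round (x j)).trans (le_refl _)

lemma periodic_exists_max (f : Euc n → ℝ) (hc : Continuous f) (hp : TorusFun f) :
    ∃ x₀, ∀ x, f x ≤ f x₀ := by
  obtain ⟨x₀, _, hmax⟩ := (isCompact_closedBall (0 : Euc n) n).exists_isMaxOn
    ⟨0, by simp [Nat.cast_nonneg]⟩ hc.continuousOn
  refine ⟨x₀, fun x => ?_⟩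
  obtain ⟨z, hz, hznorm⟩ := exists_shift_bounded x
  have : f x = f (x + z) := (hp x z hz).symm
  rw [this]
  exact hmax (by simpa [Metric.mem_closedBall, dist_eq_norm] using hznorm)

lemma periodic_bounded (f : Euc n → ℝ) (hc : Continuous f) (hp : TorusFun f) :
    ∃ C : ℝ, 0 ≤ C ∧ ∀ x, |f x| ≤ C := by
  obtain ⟨x₀, h⟩ := periodic_exists_max (fun x => |f x|) hc.abs
    (fun x z hz => by simp [hp x z hz])
  exact ⟨|f x₀|, abs_nonneg _, h⟩

/-- uniform continuity of periodic continuous functions -/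
lemma periodic_unif_cont (f : Euc n → ℝ) (hc : Continuous f) (hp : TorusFun f) :
    ∀ ε > (0:ℝ), ∃ δ > (0:ℝ), ∀ x y : Euc n, ‖x - y‖ ≤ δ → |f x - f y| ≤ ε := by
  intro ε hε
  have hcomp : IsCompact (Metric.closedBall (0 : Euc n) (n + 1)) := isCompact_closedBall _ _
  have huc := hcomp.uniformContinuousOn_of_continuous hc.continuousOn
  rw [Metric.uniformContinuousOn_iff] at huc
  obtain ⟨δ, hδ, hd⟩ := huc ε hε
  refine ⟨min (δ/2) 1, by positivity, fun x y hxy => ?_⟩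
  obtain ⟨z, hz, hznorm⟩ := exists_shift_bounded x
  have hx' : x + z ∈ Metric.closedBall (0 : Euc n) (n + 1) := by
    simp only [Metric.mem_closedBall, dist_eq_norm, sub_zero]; linarith
  have hy' : y + z ∈ Metric.closedBall (0 : Euc n) (n + 1) := by
    simp only [Metric.mem_closedBall, dist_eq_norm, sub_zero]
    have : y + z = (x + z) - (x - y) := by abel
    rw [this]
    calc ‖x + z - (x - y)‖ ≤ ‖x + z‖ + ‖x - y‖ := norm_sub_le _ _
      _ ≤ n + 1 := by
          have := le_trans hxy (min_le_right _ _); linarith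
  have hdist : dist (x + z) (y + z) < δ := by
    rw [dist_eq_norm]
    have : x + z - (y + z) = x - y := by abel
    rw [this]
    have h2 := le_trans hxy (min_le_left _ _)
    linarith
  have := hd (x + z) hx' (y + z) hy' hdist
  rw [hp x z hz, hp y z hz, Real.dist_eq] at this
  exact this.le


/-- uniform continuity in x (uniform in ξ) of periodic continuous functions on 𝕋ⁿ×Ξ -/
lemma periodic_unif_cont2 {Ξ : Type*} [MetricSpace Ξ] [CompactSpace Ξ]
    {E : Type*} [NormedAddCommGroup E]
    (f : Euc n × Ξ → E) (hc : Continuous f) (hp : TorusFun2 f) :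
    ∀ ε > (0:ℝ), ∃ δ > (0:ℝ), ∀ (x y : Euc n) (ξ : Ξ), ‖x - y‖ ≤ δ →
      ‖f (x, ξ) - f (y, ξ)‖ ≤ ε := by
  intro ε hε
  have hcomp : IsCompact ((Metric.closedBall (0 : Euc n) (n + 1)) ×ˢ (Set.univ : Set Ξ)) :=
    (isCompact_closedBall _ _).prod isCompact_univ
  have huc := hcomp.uniformContinuousOn_of_continuous hc.continuousOn
  rw [Metric.uniformContinuousOn_iff] at huc
  obtain ⟨δ, hδ, hd⟩ := huc ε hε
  refine ⟨min (δ/2) 1, by positivity, fun x y ξ hxy => ?_⟩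
  obtain ⟨z, hz, hznorm⟩ := exists_shift_bounded x
  have hx' : ((x + z, ξ) : Euc n × Ξ) ∈ (Metric.closedBall (0 : Euc n) (n + 1)) ×ˢ Set.univ := by
    constructor
    · simp only [Metric.mem_closedBall, dist_eq_norm, sub_zero]; linarith
    · trivial
  have hy' : ((y + z, ξ) : Euc n × Ξ) ∈ (Metric.closedBall (0 : Euc n) (n + 1)) ×ˢ Set.univ := by
    constructor
    · simp only [Metric.mem_closedBall, dist_eq_norm, sub_zero]
      have hyz : y + z = (x + z) - (x - y) := by abel
      rw [hyz]
      calc ‖x + z - (x - y)‖ ≤ ‖x + z‖ + ‖x - y‖ := norm_sub_le _ _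
        _ ≤ n + 1 := by
            have := le_trans hxy (min_le_right _ _); linarith
    · trivial
  have hdist : dist ((x + z, ξ) : Euc n × Ξ) (y + z, ξ) < δ := by
    rw [Prod.dist_eq]
    simp only [dist_self]
    rw [dist_eq_norm]
    have h3 : x + z - (y + z) = x - y := by abel
    rw [h3]
    have h2 := le_trans hxy (min_le_left _ _)
    have : max ‖x - y‖ 0 ≤ ‖x - y‖ := max_le (le_refl _) (norm_nonneg _)
    calc max ‖x - y‖ 0 ≤ ‖x - y‖ := this
      _ < δ := by linarith
  have := hd (x + z, ξ) hx' (y + z, ξ) hy' hdist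
  rw [hp x z ξ hz, hp y z ξ hz, dist_eq_norm] at this
  exact this.le

/-! ### The trigonometric penalty function Φ -/

def Phi (n : ℕ) (x : Euc n) : ℝ := ∑ j, (1 - Real.cos (2 * π * x j))

def GPhi (n : ℕ) (x : Euc n) : Euc n := eucOf fun j => 2 * π * Real.sin (2 * π * x j)

lemma Phi_nonneg (x : Euc n) : 0 ≤ Phi n x :=
  Finset.sum_nonneg fun j _ => by nlinarith [Real.cos_le_one (2 * π * x j)]

lemma Phi_zero : Phi n (0 : Euc n) = 0 := by
  unfold Phi
  have h0 : ∀ j : Fin n, (0 : Euc n) j = 0 := fun _ => rfl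
  simp [h0]

lemma Phi_periodic : TorusFun (Phi n) := by
  intro x z hz
  unfold Phi
  refine Finset.sum_congr rfl fun j _ => ?_
  obtain ⟨k, hk⟩ := hz j
  rw [euc_add_apply, hk]
  congr 1
  have : 2 * π * (x j + k) = 2 * π * x j + k * (2 * π) := by ring
  rw [this, Real.cos_add_int_mul_two_pi]

lemma Phi_neg (x : Euc n) : Phi n (-x) = Phi n x := by
  unfold Phi
  refine Finset.sum_congr rfl fun j _ => ?_
  have : ((-x : Euc n) j) = -(x j) := rfl
  rw [this]
  congr 1
  rw [show 2 * π * -(x j) = -(2 * π * x j) by ring, Real.cos_neg]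

lemma one_sub_cos_le (θ : ℝ) : 1 - Real.cos θ ≤ θ ^ 2 / 2 := by
  have h1 : Real.sin (θ/2) ^ 2 = 1/2 - Real.cos (2 * (θ/2)) / 2 := Real.sin_sq_eq_half_sub _
  have h2 : Real.sin (θ/2) ^ 2 ≤ (θ/2) ^ 2 := Real.sin_sq_le_sq
  have h3 : 2 * (θ/2) = θ := by ring
  rw [h3] at h1
  nlinarith

lemma one_sub_cos_ge (t : ℝ) (ht : |t| ≤ 1/2) : 8 * t ^ 2 ≤ 1 - Real.cos (2 * π * t) := by
  have h1 : Real.sin (π * t) ^ 2 = 1/2 - Real.cos (2 * (π * t)) / 2 := Real.sin_sq_eq_half_sub _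
  have h2 : 2 * t ^ 2 ≤ Real.sin (π * t) ^ 2 / 1 + t^2 → True := fun _ => trivial
  -- |sin (π t)| ≥ 2 |t|
  have hsin : 2 * |t| ≤ |Real.sin (π * t)| := by
    have h0 : (0:ℝ) ≤ π * |t| := by positivity
    have hle : π * |t| ≤ π / 2 := by
      have hπ : 0 < π := Real.pi_pos
      nlinarith [abs_nonneg t]
    have := Real.mul_le_sin h0 hle
    have heq : 2 / π * (π * |t|) = 2 * |t| := by
      field_simp
    rw [heq] at this
    calc 2 * |t| ≤ Real.sin (π * |t|) := this
      _ ≤ |Real.sin (π * t)| := by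
          rcases abs_cases t with ⟨h, _⟩ | ⟨h, _⟩
          · rw [h]; exact le_abs_self _
          · rw [h]
            rw [show π * -t = -(π * t) by ring, Real.sin_neg]
            exact neg_le_abs _
  have hs2 : 4 * t ^ 2 ≤ Real.sin (π * t) ^ 2 := by
    have hms := mul_self_le_mul_self (by positivity : (0:ℝ) ≤ 2 * |t|) hsin
    nlinarith [sq_abs t, sq_abs (Real.sin (π * t))]
  have h3 : 2 * (π * t) = 2 * π * t := by ring
  rw [h3] at h1
  nlinarith

lemma Phi_le (a : Euc n) : Phi n a ≤ 2 * π ^ 2 * ‖a‖ ^ 2 := by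
  rw [euc_norm_sq, Finset.mul_sum]
  refine Finset.sum_le_sum fun j _ => ?_
  have := one_sub_cos_le (2 * π * a j)
  nlinarith

lemma Phi_ge (a : Euc n) (h : ∀ j, |a j| ≤ 1/2) : 8 * ‖a‖ ^ 2 ≤ Phi n a := by
  rw [euc_norm_sq, Finset.mul_sum]
  exact Finset.sum_le_sum fun j _ => one_sub_cos_ge (a j) (h j)

lemma Phi_term_le (a : Euc n) (j : Fin n) : 1 - Real.cos (2 * π * a j) ≤ Phi n a := by
  unfold Phi
  exact Finset.single_le_sum (f := fun i => 1 - Real.cos (2 * π * a i))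
    (fun i _ => by simp only []; nlinarith [Real.cos_le_one (2 * π * a i)]) (Finset.mem_univ j)

lemma GPhi_sq (a : Euc n) : ‖GPhi n a‖ ^ 2 = ∑ j, (2 * π * Real.sin (2 * π * a j)) ^ 2 := by
  rw [euc_norm_sq]; rfl

lemma GPhi_lower (a : Euc n) (h : Phi n a ≤ 1) :
    2 * π * Real.sqrt (Phi n a) ≤ ‖GPhi n a‖ := by
  have key : (2 * π) ^ 2 * Phi n a ≤ ‖GPhi n a‖ ^ 2 := by
    rw [GPhi_sq]
    unfold Phi
    rw [Finset.mul_sum]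
    refine Finset.sum_le_sum fun j _ => ?_
    set θ := 2 * π * a j
    have hterm : 1 - Real.cos θ ≤ 1 := le_trans (Phi_term_le a j) h
    have hcos : 0 ≤ Real.cos θ := by linarith
    have hsin : Real.sin θ ^ 2 = (1 - Real.cos θ) * (1 + Real.cos θ) := by
      nlinarith [Real.sin_sq_add_cos_sq θ]
    have h1c : 0 ≤ 1 - Real.cos θ := by nlinarith [Real.cos_le_one θ]
    nlinarith
  have h2 : 2 * π * Real.sqrt (Phi n a) = Real.sqrt ((2 * π)^2 * Phi n a) := by
    rw [Real.sqrt_mul (by positivity), Real.sqrt_sq (by positivity)]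
  rw [h2]
  calc Real.sqrt ((2 * π)^2 * Phi n a) ≤ Real.sqrt (‖GPhi n a‖ ^ 2) := Real.sqrt_le_sqrt key
    _ = ‖GPhi n a‖ := Real.sqrt_sq (norm_nonneg _)


/-! ### Gradient of Φ -/

lemma hasDerivAt_one_sub_cos (t : ℝ) :
    HasDerivAt (fun s => 1 - Real.cos (2 * π * s)) (2 * π * Real.sin (2 * π * t)) t := by
  have h1 : HasDerivAt (fun s : ℝ => 2 * π * s) (2 * π) t := by
    simpa using (hasDerivAt_id t).const_mul (2 * π)
  have h2 : HasDerivAt (fun s : ℝ => Real.cos (2 * π * s))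
      (-Real.sin (2 * π * t) * (2 * π)) t := (Real.hasDerivAt_cos (2 * π * t)).comp t h1
  have h3 := h2.const_sub 1
  exact h3.congr_deriv (by ring)

lemma contDiff_Phi : ContDiff ℝ 1 (Phi n) := by
  unfold Phi
  refine ContDiff.sum fun j _ => ?_
  have hproj : ContDiff ℝ 1 (fun x : Euc n => x j) := (EuclideanSpace.proj (𝕜 := ℝ) j).contDiff
  have : ContDiff ℝ 1 (fun s : ℝ => 1 - Real.cos (2 * π * s)) := by
    refine ContDiff.sub contDiff_const ?_
    exact Real.contDiff_cos.comp (contDiff_const.mul contDiff_id)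
  exact this.comp hproj

lemma hasGradientAt_Phi (x : Euc n) : HasGradientAt (Phi n) (GPhi n x) x := by
  rw [hasGradientAt_iff_hasFDerivAt]
  have hsum : HasFDerivAt (Phi n)
      (∑ j, (2 * π * Real.sin (2 * π * x j)) • (EuclideanSpace.proj (𝕜 := ℝ) j)) x := by
    unfold Phi
    refine HasFDerivAt.fun_sum fun j _ => ?_
    have hproj : HasFDerivAt (fun y : Euc n => y j) (EuclideanSpace.proj (𝕜 := ℝ) j) x :=
      (EuclideanSpace.proj (𝕜 := ℝ) j).hasFDerivAt
    have hc := (hasDerivAt_one_sub_cos (x j)).comp_hasFDerivAt x hproj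
    exact hc
  refine hsum.congr_fderiv ?_
  refine ContinuousLinearMap.ext fun v => ?_
  rw [InnerProductSpace.toDual_apply_apply]
  rw [PiLp.inner_apply]
  simp only [ContinuousLinearMap.sum_apply, ContinuousLinearMap.smul_apply,
    PiLp.proj_apply, RCLike.inner_apply, conj_trivial, smul_eq_mul]
  exact Finset.sum_congr rfl fun j _ => mul_comm _ _

/-- chain rule: gradient of f ∘ (Φ(· - y)) -/
lemma hasGradientAt_comp_Phi (y x : Euc n) {f : ℝ → ℝ} {f' : ℝ}
    (hf : HasDerivAt f f' (Phi n (x - y))) :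
    HasGradientAt (fun w => f (Phi n (w - y))) (f' • GPhi n (x - y)) x := by
  rw [hasGradientAt_iff_hasFDerivAt]
  have hinner : HasFDerivAt (fun w : Euc n => Phi n (w - y))
      ((InnerProductSpace.toDual ℝ (Euc n)) (GPhi n (x - y))) x := by
    have h1 : HasFDerivAt (fun w : Euc n => w - y) (ContinuousLinearMap.id ℝ (Euc n)) x :=
      (hasFDerivAt_id x).sub_const y
    have h2 := (hasGradientAt_Phi (x - y)).hasFDerivAt
    have := h2.comp x h1
    exact this
  have h3 := hf.comp_hasFDerivAt x hinner
  rw [← _root_.map_smul] at h3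
  exact h3

/-- derivative of Φ along a line -/
lemma hasDerivAt_Phi_line (a e : Euc n) :
    HasDerivAt (fun t : ℝ => Phi n (a + t • e)) ⟪GPhi n a, e⟫ 0 := by
  have hcurve : HasDerivAt (fun t : ℝ => a + t • e) e 0 := by
    have h1 : HasDerivAt (fun t : ℝ => t • e) ((1:ℝ) • e) 0 := (hasDerivAt_id 0).smul_const e
    simpa using h1.const_add a
  have hΦ := (hasGradientAt_Phi (a + (0:ℝ) • e)).hasFDerivAt
  have h4 := hΦ.comp_hasDerivAt 0 hcurve
  simp only [zero_smul, add_zero] at h4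
  exact h4


/-! ### Lemmas about the Hamiltonian -/

section Ham

variable {Ξ : Type*} [MetricSpace Ξ] [CompactSpace Ξ] [Nonempty Ξ]
variable {g : Fin m → Euc n × Ξ → Euc n} {L : Fin m → Euc n × Ξ → ℝ} {i : Fin m}

lemma ham_cont_xi (hg : Continuous (g i)) (hL : Continuous (L i)) (x p : Euc n) :
    Continuous fun ξ : Ξ => -⟪g i (x, ξ), p⟫ - L i (x, ξ) := by
  have hgx : Continuous fun ξ : Ξ => g i (x, ξ) := hg.comp (Continuous.prodMk_right x)
  have hLx : Continuous fun ξ : Ξ => L i (x, ξ) := hL.comp (Continuous.prodMk_right x)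
  exact ((hgx.inner continuous_const).neg).sub hLx

lemma ham_bddAbove (hg : Continuous (g i)) (hL : Continuous (L i)) (x p : Euc n) :
    BddAbove (Set.range fun ξ : Ξ => -⟪g i (x, ξ), p⟫ - L i (x, ξ)) := by
  have := (isCompact_univ.image (ham_cont_xi hg hL x p)).bddAbove
  rwa [Set.image_univ] at this

lemma le_ham (hg : Continuous (g i)) (hL : Continuous (L i)) (x p : Euc n) (ξ : Ξ) :
    -⟪g i (x, ξ), p⟫ - L i (x, ξ) ≤ ham g L i x p :=
  le_ciSup (ham_bddAbove hg hL x p) ξ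

lemma ham_le {c : ℝ} (h : ∀ ξ : Ξ, -⟪g i (x, ξ), p⟫ - L i (x, ξ) ≤ c) :
    ham g L i x p ≤ c := ciSup_le h

lemma ham_sub_le (hg : Continuous (g i)) (hL : Continuous (L i)) {x y p : Euc n} {a b P : ℝ}
    (hP : ‖p‖ ≤ P) (ha : ∀ ξ : Ξ, ‖g i (x, ξ) - g i (y, ξ)‖ ≤ a)
    (hb : ∀ ξ : Ξ, |L i (x, ξ) - L i (y, ξ)| ≤ b) :
    ham g L i x p ≤ ham g L i y p + (a * P + b) := by
  refine ciSup_le fun ξ => ?_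
  have hc : |⟪g i (x,ξ) - g i (y,ξ), p⟫| ≤ a * P := by
    calc |⟪g i (x,ξ) - g i (y,ξ), p⟫| ≤ ‖g i (x,ξ) - g i (y,ξ)‖ * ‖p‖ :=
          abs_real_inner_le_norm _ _
      _ ≤ a * P := by
          have h1 := ha ξ
          have h2 := norm_nonneg (g i (x,ξ) - g i (y,ξ))
          have h3 := norm_nonneg p
          nlinarith
  have hsplit : ⟪g i (x,ξ), p⟫ = ⟪g i (y,ξ), p⟫ + ⟪g i (x,ξ) - g i (y,ξ), p⟫ := by
    rw [inner_sub_left]; ring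
  have habs := abs_le.1 hc
  have habs2 := abs_le.1 (hb ξ)
  have h4 : -⟪g i (x,ξ), p⟫ - L i (x,ξ) ≤ (-⟪g i (y,ξ), p⟫ - L i (y,ξ)) + (a * P + b) := by
    rw [hsplit]; push_cast; linarith [habs.1, habs.2, habs2.1, habs2.2]
  exact h4.trans (add_le_add_left (le_ham hg hL y p ξ) _)

end Ham

/-! ### Monotone matrix facts -/

lemma rho_nonneg {B : Euc n → Matrix (Fin m) (Fin m) ℝ} (hB : GoodCoupling B) (x : Euc n)
    (k : Fin m) : 0 ≤ ∑ j, B x k j := by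
  have := hB.2 x (fun _ => 1) k (fun _ => le_refl 1) zero_le_one
  simpa using this

lemma exists_B_bound {B : Euc n → Matrix (Fin m) (Fin m) ℝ} (hB : GoodCoupling B) :
    ∃ C : ℝ, 0 ≤ C ∧ ∀ (x : Euc n) (i j : Fin m), |B x i j| ≤ C := by
  have h : ∀ p : Fin m × Fin m, ∃ C : ℝ, 0 ≤ C ∧ ∀ x, |B x p.1 p.2| ≤ C := fun p =>
    periodic_bounded _ (hB.1 p.1 p.2).1 (hB.1 p.1 p.2).2
  choose C hC0 hC using h
  refine ⟨∑ p : Fin m × Fin m, C p, Finset.sum_nonneg fun p _ => hC0 p, fun x i j => ?_⟩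
  calc |B x i j| ≤ C (i, j) := hC (i, j) x
    _ ≤ ∑ p : Fin m × Fin m, C p :=
        Finset.single_le_sum (fun p _ => hC0 p) (Finset.mem_univ (i, j))

lemma exists_fam_bound (v : Fin m → Euc n → ℝ) (hc : ∀ i, Continuous (v i))
    (hp : ∀ i, TorusFun (v i)) :
    ∃ C : ℝ, 0 ≤ C ∧ ∀ (i : Fin m) (x : Euc n), |v i x| ≤ C := by
  have h : ∀ i : Fin m, ∃ C : ℝ, 0 ≤ C ∧ ∀ x, |v i x| ≤ C := fun i =>
    periodic_bounded _ (hc i) (hp i)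
  choose C hC0 hC using h
  refine ⟨∑ i, C i, Finset.sum_nonneg fun i _ => hC0 i, fun i x => ?_⟩
  calc |v i x| ≤ C i := hC i x
    _ ≤ ∑ i, C i := Finset.single_le_sum (fun i _ => hC0 i) (Finset.mem_univ i)


lemma isIntVec_neg {z : Euc n} (h : IsIntVec z) : IsIntVec (-z) := by
  intro j
  obtain ⟨k, hk⟩ := h j
  exact ⟨-k, by rw [show ((-z : Euc n) j) = -(z j) from rfl, hk]; push_cast; ring⟩

lemma GPhi_neg (a : Euc n) : GPhi n (-a) = -GPhi n a := by
  ext j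
  show 2 * Real.pi * Real.sin (2 * Real.pi * (-a : Euc n) j) = -(2 * Real.pi * Real.sin (2 * Real.pi * a j))
  rw [show ((-a : Euc n) j) = -(a j) from rfl]
  rw [show 2 * Real.pi * -(a j) = -(2 * Real.pi * a j) by ring, Real.sin_neg]
  ring

/-- maximum of a finite family of periodic continuous functions -/
lemma periodic_exists_max_fam (hm : 0 < m) (G : Fin m → Euc n → ℝ)
    (hc : ∀ i, Continuous (G i)) (hp : ∀ i, TorusFun (G i)) :
    ∃ (k : Fin m) (x₀ : Euc n), ∀ i x, G i x ≤ G k x₀ := by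
  have h : ∀ i : Fin m, ∃ x₀, ∀ x, G i x ≤ G i x₀ := fun i =>
    periodic_exists_max (G i) (hc i) (hp i)
  choose xm hxm using h
  obtain ⟨k, _, hk⟩ := Finset.exists_max_image Finset.univ (fun i => G i (xm i))
    ⟨⟨0, hm⟩, Finset.mem_univ _⟩
  exact ⟨k, xm k, fun i x => (hxm i x).trans (hk i (Finset.mem_univ i))⟩

/-- maximum of a finite family of doubly periodic continuous functions of two variables -/
lemma periodic_exists_max_fam2 (hm : 0 < m) (F : Fin m → Euc n → Euc n → ℝ)
    (hc : ∀ i, Continuous fun q : Euc n × Euc n => F i q.1 q.2)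
    (hpx : ∀ i (x y z : Euc n), IsIntVec z → F i (x + z) y = F i x y)
    (hpy : ∀ i (x y z : Euc n), IsIntVec z → F i x (y + z) = F i x y) :
    ∃ (k : Fin m) (x₀ y₀ : Euc n), ∀ i x y, F i x y ≤ F k x₀ y₀ := by
  have h : ∀ i : Fin m, ∃ q₀ : Euc n × Euc n, ∀ q : Euc n × Euc n,
      F i q.1 q.2 ≤ F i q₀.1 q₀.2 := by
    intro i
    have hcomp : IsCompact ((Metric.closedBall (0 : Euc n) n) ×ˢ (Metric.closedBall (0 : Euc n) n)) :=
      (isCompact_closedBall _ _).prod (isCompact_closedBall _ _)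
    obtain ⟨q₀, _, hq₀⟩ := hcomp.exists_isMaxOn
      ⟨(0, 0), by constructor <;> simp⟩ (hc i).continuousOn
    refine ⟨q₀, fun q => ?_⟩
    obtain ⟨z, hz, hznorm⟩ := exists_shift_bounded q.1
    obtain ⟨w, hw, hwnorm⟩ := exists_shift_bounded q.2
    have : F i q.1 q.2 = F i (q.1 + z) (q.2 + w) := by rw [hpx i _ _ z hz, hpy i _ _ w hw]
    rw [this]
    exact hq₀ (Set.mk_mem_prod (by simpa [Metric.mem_closedBall, dist_eq_norm] using hznorm)
      (by simpa [Metric.mem_closedBall, dist_eq_norm] using hwnorm))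
  choose qm hqm using h
  obtain ⟨k, _, hk⟩ := Finset.exists_max_image Finset.univ (fun i => F i (qm i).1 (qm i).2)
    ⟨⟨0, hm⟩, Finset.mem_univ _⟩
  exact ⟨k, (qm k).1, (qm k).2, fun i x y => (hqm i (x, y)).trans (hk i (Finset.mem_univ i))⟩

/-- key gradient bound at a minimum against a Lipschitz function -/
lemma gphi_bound_of_min {a : Euc n} {ε C : ℝ} (hε : 0 < ε) (hC : 0 ≤ C)
    (h : ∀ e : Euc n, ‖e‖ = 1 → ∀ t : ℝ, 0 < t →
      -(C * t) ≤ (Phi n (a + t • e) - Phi n a) / ε) :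
    ‖GPhi n a‖ ≤ ε * C := by
  rcases eq_or_ne (GPhi n a) 0 with h0 | h0
  · rw [h0, norm_zero]; positivity
  · set e := -(‖GPhi n a‖⁻¹ • GPhi n a) with he
    have hne : ‖GPhi n a‖ ≠ 0 := norm_ne_zero_iff.2 h0
    have hnorm : ‖e‖ = 1 := by
      rw [he, norm_neg, norm_smul, norm_inv, norm_norm, inv_mul_cancel₀ hne]
    have hinner : ⟪GPhi n a, e⟫ = -‖GPhi n a‖ := by
      rw [he, inner_neg_right, real_inner_smul_right, real_inner_self_eq_norm_sq]
      field_simp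
    have hd := hasDerivAt_Phi_line a e
    have htend := hasDerivAt_iff_tendsto_slope.1 hd
    have htend2 : Filter.Tendsto (slope (fun t : ℝ => Phi n (a + t • e)) 0)
        (nhdsWithin 0 (Set.Ioi 0)) (nhds ⟪GPhi n a, e⟫) :=
      htend.mono_left (nhdsWithin_mono 0 (fun t ht => ne_of_gt ht))
    have hev : ∀ᶠ t in nhdsWithin (0:ℝ) (Set.Ioi 0),
        -(ε * C) ≤ slope (fun t : ℝ => Phi n (a + t • e)) 0 t := by
      refine eventually_nhdsWithin_of_forall fun t ht => ?_
      have ht' : (0:ℝ) < t := ht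
      have h1 := h e hnorm t ht'
      have h2 : -(C * t) * ε ≤ Phi n (a + t • e) - Phi n a := (le_div_iff₀ hε).1 h1
      rw [slope_def_field]
      have h3 : Phi n (a + (0:ℝ) • e) = Phi n a := by rw [zero_smul, add_zero]
      rw [h3, sub_zero]
      rw [le_div_iff₀ ht']
      nlinarith
    have hlim := ge_of_tendsto htend2 hev
    rw [hinner] at hlim
    linarith


section Main

variable {Ξ : Type*} [MetricSpace Ξ] [CompactSpace Ξ] [Nonempty Ξ]

lemma combined_UC (hm : 0 < m) {g : Fin m → Euc n × Ξ → Euc n} {L : Fin m → Euc n × Ξ → ℝ}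
    (hgL : GoodData g L) {B : Euc n → Matrix (Fin m) (Fin m) ℝ} (hB : GoodCoupling B) :
    ∀ τ > (0:ℝ), ∃ δ > (0:ℝ), δ ≤ 1 ∧ ∀ x y : Euc n, ‖x - y‖ ≤ δ →
      (∀ i j, |B x i j - B y i j| ≤ τ) ∧ (∀ (i : Fin m) (ξ : Ξ), ‖g i (x,ξ) - g i (y,ξ)‖ ≤ τ) ∧
      (∀ (i : Fin m) (ξ : Ξ), |L i (x,ξ) - L i (y,ξ)| ≤ τ) := by
  intro τ hτ
  have hBuc : ∀ p : Fin m × Fin m, ∃ δ : ℝ, 0 < δ ∧ ∀ x y : Euc n, ‖x - y‖ ≤ δ →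
      |B x p.1 p.2 - B y p.1 p.2| ≤ τ := by
    intro p
    obtain ⟨δ, hδ, hd⟩ := periodic_unif_cont _ (hB.1 p.1 p.2).1 (hB.1 p.1 p.2).2 τ hτ
    exact ⟨δ, hδ, hd⟩
  have hguc : ∀ i : Fin m, ∃ δ : ℝ, 0 < δ ∧ ∀ (x y : Euc n) (ξ : Ξ), ‖x - y‖ ≤ δ →
      ‖g i (x,ξ) - g i (y,ξ)‖ ≤ τ := by
    intro i
    obtain ⟨δ, hδ, hd⟩ := periodic_unif_cont2 _ (hgL.1 i).1 (hgL.1 i).2 τ hτ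
    exact ⟨δ, hδ, hd⟩
  have hLuc : ∀ i : Fin m, ∃ δ : ℝ, 0 < δ ∧ ∀ (x y : Euc n) (ξ : Ξ), ‖x - y‖ ≤ δ →
      |L i (x,ξ) - L i (y,ξ)| ≤ τ := by
    intro i
    obtain ⟨δ, hδ, hd⟩ := periodic_unif_cont2 _ (hgL.2 i).1 (hgL.2 i).2 τ hτ
    refine ⟨δ, hδ, fun x y ξ h => ?_⟩
    simpa [Real.norm_eq_abs] using hd x y ξ h
  choose δB hδB hdB using hBuc
  choose δg hδg hdg using hguc
  choose δL hδL hdL using hLuc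
  have hne : (Finset.univ : Finset (Fin m × Fin m)).Nonempty := ⟨(⟨0,hm⟩,⟨0,hm⟩), Finset.mem_univ _⟩
  have hne' : (Finset.univ : Finset (Fin m)).Nonempty := ⟨⟨0,hm⟩, Finset.mem_univ _⟩
  set δ := min 1 (min (Finset.univ.inf' hne δB)
      (min (Finset.univ.inf' hne' δg) (Finset.univ.inf' hne' δL))) with hδdef
  have hδpos : 0 < δ := by
    refine lt_min one_pos (lt_min ?_ (lt_min ?_ ?_))
    · exact (Finset.lt_inf'_iff hne).2 fun p _ => hδB p
    · exact (Finset.lt_inf'_iff hne').2 fun i _ => hδg i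
    · exact (Finset.lt_inf'_iff hne').2 fun i _ => hδL i
  refine ⟨δ, hδpos, min_le_left _ _, fun x y hxy => ⟨fun i j => ?_, fun i ξ => ?_, fun i ξ => ?_⟩⟩
  · refine hdB (i, j) x y (hxy.trans ?_)
    exact le_trans (min_le_right _ _) ((min_le_left _ _).trans (Finset.inf'_le _ (Finset.mem_univ _)))
  · refine hdg i x y ξ (hxy.trans ?_)
    exact le_trans (min_le_right _ _) ((min_le_right _ _).trans
      ((min_le_left _ _).trans (Finset.inf'_le _ (Finset.mem_univ _))))
  · refine hdL i x y ξ (hxy.trans ?_)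
    exact le_trans (min_le_right _ _) ((min_le_right _ _).trans
      ((min_le_right _ _).trans (Finset.inf'_le _ (Finset.mem_univ _))))

/-- Upper comparison: a subsolution of (P_lam) lies below v₀ + K. -/
lemma sup_upper (hm : 0 < m)
    {g : Fin m → Euc n × Ξ → Euc n} {L : Fin m → Euc n × Ξ → ℝ} (hgL : GoodData g L)
    {B : Euc n → Matrix (Fin m) (Fin m) ℝ} (hB : GoodCoupling B)
    {lam : ℝ} (hlam : 0 < lam)
    {v₀ vl : Fin m → Euc n → ℝ}
    (hv₀c : ∀ i, Continuous (v₀ i)) (hv₀p : ∀ i, TorusFun (v₀ i))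
    {L₀ : ℝ} (hL₀ : 0 ≤ L₀) (hlip : ∀ i (x y : Euc n), |v₀ i x - v₀ i y| ≤ L₀ * ‖x - y‖)
    {K : ℝ} (hK : 0 < K) (hbd : ∀ i x, |v₀ i x| ≤ K)
    (hsuper : IsSupersol B 0 g L (fun _ => 0) v₀)
    (hvc : ∀ i, Continuous (vl i)) (hvp : ∀ i, TorusFun (vl i))
    (hsub : IsSubsol B lam g L (fun _ => 0) vl) :
    ∀ i x, vl i x ≤ v₀ i x + K := by
  -- the max of vl - v₀ - K
  obtain ⟨k₀, x₀, hmax₀⟩ := periodic_exists_max_fam hm (fun i x => vl i x - v₀ i x - K)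
    (fun i => ((hvc i).sub (hv₀c i)).sub continuous_const)
    (fun i x z hz => by simp [hvp i x z hz, hv₀p i x z hz])
  set S := vl k₀ x₀ - v₀ k₀ x₀ - K with hSdef
  rcases le_or_gt S 0 with hS0 | hS0
  · intro i x
    have := hmax₀ i x
    linarith
  exfalso
  -- choose uniform continuity scale
  set τ := lam * S / (2 * (m * K + L₀ + 1)) with hτdef
  have hmK : (0:ℝ) < m * K + L₀ + 1 := by positivity
  have hτpos : 0 < τ := by positivity
  obtain ⟨δ, hδpos, hδ1, hUC⟩ := combined_UC hm hgL hB τ hτpos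
  set ε := δ ^ 2 / K with hεdef
  have hεpos : 0 < ε := by positivity
  -- maximize the doubled functional
  obtain ⟨k, xh, yh0, hmax⟩ := periodic_exists_max_fam2 hm
    (fun i x y => vl i x - v₀ i y - K - Phi n (x - y) / ε)
    (fun i => by
      refine Continuous.sub (Continuous.sub (Continuous.sub ?_ ?_) continuous_const) ?_
      · exact (hvc i).comp continuous_fst
      · exact (hv₀c i).comp continuous_snd
      · exact (Continuous.div_const (contDiff_Phi.continuous.comp
          (continuous_fst.sub continuous_snd)) ε))
    (fun i x y z hz => by
      have h1 : x + z - y = (x - y) + z := by abel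
      simp only [hvp i x z hz, h1, Phi_periodic (x - y) z hz])
    (fun i x y z hz => by
      have h1 : x - (y + z) = (x - y) + (-z) := by abel
      simp only [hv₀p i y z hz, h1, Phi_periodic (x - y) (-z) (isIntVec_neg hz)])
  -- renormalize yh so that the coordinates of xh - yh are within [-1/2, 1/2]
  obtain ⟨z, hz, hzcoord⟩ := exists_shift_half (xh - yh0)
  set yh := yh0 - z with hyhdef
  have hxy : xh - yh = (xh - yh0) + z := by rw [hyhdef]; abel
  have hmax' : ∀ i x y, vl i x - v₀ i y - K - Phi n (x - y) / ε ≤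
      vl k xh - v₀ k yh - K - Phi n (xh - yh) / ε := by
    intro i x y
    have e1 : v₀ k yh = v₀ k yh0 := by
      rw [hyhdef, sub_eq_add_neg]; exact hv₀p k yh0 (-z) (isIntVec_neg hz)
    have e2 : Phi n (xh - yh) = Phi n (xh - yh0) := by
      rw [hxy]; exact Phi_periodic (xh - yh0) z hz
    rw [e1, e2]; exact hmax i x y
  have hcoord : ∀ j, |(xh - yh) j| ≤ 1/2 := by rw [hxy]; exact hzcoord
  set a := xh - yh with hadef
  have hPhia : 0 ≤ Phi n a := Phi_nonneg a
  -- S is dominated by the doubled max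
  have hSle : S ≤ vl k xh - v₀ k yh - K - Phi n a / ε := by
    have h1 := hmax' k₀ x₀ x₀
    rw [sub_self, Phi_zero] at h1
    have h2 : (0:ℝ)/ε = 0 := zero_div ε
    rw [h2] at h1
    rw [hSdef]
    linarith
  -- the penalty is small
  have hPhi2K : Phi n a ≤ 2 * K * ε := by
    have h1 := hmax' k xh xh
    rw [sub_self, Phi_zero] at h1
    have h2 : Phi n a / ε ≤ v₀ k xh - v₀ k yh := by
      have h3 : (0:ℝ) / ε = 0 := zero_div ε
      rw [h3] at h1
      linarith
    have h3 : v₀ k xh - v₀ k yh ≤ 2 * K := by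
      have hb1 := abs_le.1 (hbd k xh)
      have hb2 := abs_le.1 (hbd k yh)
      linarith [hb1.2, hb2.1]
    have h4 : Phi n a = (Phi n a / ε) * ε := by field_simp
    rw [h4]
    nlinarith
  have hnorma : ‖a‖ ≤ δ := by
    have h8 := Phi_ge a hcoord
    have h9 : 2 * K * ε = 2 * δ^2 := by rw [hεdef]; field_simp
    have h10 : ‖a‖^2 ≤ (δ/2)^2 := by nlinarith
    nlinarith [norm_nonneg a, hδpos]
  -- the common gradient vector
  set p := (1/ε) • GPhi n a with hpdef
  have hpnorm : ‖p‖ ≤ L₀ := by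
    have hG : ‖GPhi n a‖ ≤ ε * L₀ := by
      refine gphi_bound_of_min hεpos hL₀ ?_
      intro e he t ht
      have h1 := hmax' k xh (yh - t • e)
      have h2 : xh - (yh - t • e) = a + t • e := by rw [hadef]; abel
      rw [h2] at h1
      have h3 : v₀ k yh - v₀ k (yh - t • e) ≤ L₀ * t := by
        have h4 := hlip k yh (yh - t • e)
        have h5 : yh - (yh - t • e) = t • e := by abel
        have h6 : ‖t • e‖ = t := by
          rw [norm_smul, he, Real.norm_eq_abs, abs_of_pos ht, mul_one]
        rw [h5, h6] at h4
        linarith [(abs_le.1 h4).2]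
      have h7 : v₀ k yh - v₀ k (yh - t • e) ≤ (Phi n (a + t • e) - Phi n a) / ε := by
        rw [sub_div]
        linarith
      have h8 := hlip k (yh - t • e) yh
      have h5 : yh - t • e - yh = -(t • e) := by abel
      have h6 : ‖-(t • e)‖ = t := by
        rw [norm_neg, norm_smul, he, Real.norm_eq_abs, abs_of_pos ht, mul_one]
      rw [h5, h6] at h8
      have h9 := (abs_le.1 h8).2
      linarith [h7]
    rw [hpdef, norm_smul, Real.norm_eq_abs, abs_of_pos (by positivity : (0:ℝ) < 1/ε)]
    calc (1/ε) * ‖GPhi n a‖ ≤ (1/ε) * (ε * L₀) := by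
          exact mul_le_mul_of_nonneg_left hG (by positivity)
      _ = L₀ := by field_simp
  -- subsolution test at xh
  set ψ₁ : Euc n → ℝ := fun x => Phi n (x - yh) / ε with hψ₁def
  have hψ₁c : ContDiff ℝ 1 ψ₁ :=
    (contDiff_Phi.comp (contDiff_id.sub contDiff_const)).div_const ε
  have hψ₁p : TorusFun ψ₁ := by
    intro x z' hz'
    simp only [hψ₁def]
    have h1 : x + z' - yh = (x - yh) + z' := by abel
    rw [h1, Phi_periodic _ z' hz']
  have hψ₁grad : gradient ψ₁ xh = p := by
    have hd : HasDerivAt (fun s : ℝ => s / ε) (1/ε) (Phi n (xh - yh)) := by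
      simpa using (hasDerivAt_id (Phi n (xh - yh))).div_const ε
    have hgr := hasGradientAt_comp_Phi yh xh hd
    exact hgr.gradient
  have hlocmax : IsLocalMax (fun x => vl k x - ψ₁ x) xh := by
    refine Filter.Eventually.of_forall fun x => ?_
    have h1 := hmax' k x yh
    simp only [hψ₁def]
    rw [← hadef]
    linarith
  have hsubineq := hsub.2 k ψ₁ hψ₁c hψ₁p xh hlocmax
  rw [hψ₁grad] at hsubineq
  simp only [] at hsubineq
  -- supersolution test at yh
  set ψ₂ : Euc n → ℝ := fun y => -(Phi n (y - xh) / ε) with hψ₂def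
  have hψ₂c : ContDiff ℝ 1 ψ₂ :=
    ((contDiff_Phi.comp (contDiff_id.sub contDiff_const)).div_const ε).neg
  have hψ₂p : TorusFun ψ₂ := by
    intro y z' hz'
    simp only [hψ₂def]
    have h1 : y + z' - xh = (y - xh) + z' := by abel
    rw [h1, Phi_periodic _ z' hz']
  have hψ₂grad : gradient ψ₂ yh = p := by
    have hd : HasDerivAt (fun s : ℝ => -(s / ε)) (-(1/ε)) (Phi n (yh - xh)) := by
      exact ((hasDerivAt_id (Phi n (yh - xh))).div_const ε).neg
    have hgr := hasGradientAt_comp_Phi xh yh hd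
    have h1 : yh - xh = -a := by rw [hadef]; abel
    rw [h1, GPhi_neg] at hgr
    have h2 : (-(1/ε)) • (-GPhi n a) = (1/ε) • GPhi n a := by
      rw [smul_neg, neg_smul, neg_neg]
    rw [h2] at hgr
    have h3 : (fun y => -(Phi n (y - xh) / ε)) = ψ₂ := rfl
    exact hgr.gradient
  have hlocmin : IsLocalMin (fun y => v₀ k y - ψ₂ y) yh := by
    refine Filter.Eventually.of_forall fun y => ?_
    have h1 := hmax' k xh y
    simp only [hψ₂def]
    have e3 : ∀ w : Euc n, Phi n (w - xh) = Phi n (xh - w) := fun w => by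
      rw [← Phi_neg (w - xh), neg_sub]
    rw [e3 y, e3 yh, ← hadef]
    linarith
  have hsupineq := hsuper.2 k ψ₂ hψ₂c hψ₂p yh hlocmin
  rw [hψ₂grad] at hsupineq
  simp only [zero_mul, zero_add] at hsupineq
  -- monotonicity of B at xh
  have hmono := hB.2 xh (fun j => vl j xh - v₀ j yh - K - Phi n a / ε) k
    (fun i => by linarith [hmax' i xh yh]) (by linarith)
  have hrho := rho_nonneg hB xh k
  have hKΦ : 0 ≤ K + Phi n a / ε := by positivity
  have hexpand : ∑ j, B xh k j * (vl j xh - v₀ j yh - K - Phi n a / ε) =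
      (∑ j, B xh k j * vl j xh) - (∑ j, B xh k j * v₀ j yh) -
        (K + Phi n a / ε) * (∑ j, B xh k j) := by
    rw [Finset.sum_congr rfl (fun j _ => show
        B xh k j * (vl j xh - v₀ j yh - K - Phi n a / ε) =
        B xh k j * vl j xh - B xh k j * v₀ j yh - (K + Phi n a / ε) * B xh k j by ring)]
    rw [Finset.sum_sub_distrib, Finset.sum_sub_distrib, Finset.mul_sum]
  rw [hexpand] at hmono
  have hBmono : (∑ j, B xh k j * v₀ j yh) ≤ ∑ j, B xh k j * vl j xh := by
    nlinarith [mul_nonneg hKΦ hrho]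
  -- uniform continuity estimates between xh and yh
  obtain ⟨hUB, hUg, hUL⟩ := hUC xh yh (by rw [← hadef]; exact hnorma)
  have hBdiff : (∑ j, B yh k j * v₀ j yh) - (∑ j, B xh k j * v₀ j yh) ≤ m * (τ * K) := by
    have hterm : ∀ j, (B yh k j - B xh k j) * v₀ j yh ≤ τ * K := by
      intro j
      have h1 := hUB k j
      rw [abs_sub_comm] at h1
      have h2 := hbd j yh
      calc (B yh k j - B xh k j) * v₀ j yh ≤ |(B yh k j - B xh k j) * v₀ j yh| := le_abs_self _
        _ = |B yh k j - B xh k j| * |v₀ j yh| := abs_mul _ _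
        _ ≤ τ * K := mul_le_mul h1 h2 (abs_nonneg _) hτpos.le
    calc (∑ j, B yh k j * v₀ j yh) - (∑ j, B xh k j * v₀ j yh)
        = ∑ j, (B yh k j - B xh k j) * v₀ j yh := by
          rw [← Finset.sum_sub_distrib]
          exact Finset.sum_congr rfl fun j _ => by ring
      _ ≤ ∑ _j : Fin m, τ * K := Finset.sum_le_sum fun j _ => hterm j
      _ = m * (τ * K) := by
          rw [Finset.sum_const, Finset.card_univ, Fintype.card_fin, nsmul_eq_mul]
  have hhamd : ham g L k yh p ≤ ham g L k xh p + (τ * L₀ + τ) :=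
    ham_sub_le (hgL.1 k).1 (hgL.2 k).1 hpnorm
      (fun ξ => by have h1 := hUg k ξ; rwa [norm_sub_rev] at h1)
      (fun ξ => by have h1 := hUL k ξ; rwa [abs_sub_comm] at h1)
  -- lower bound for vl k xh
  have hvkS : S ≤ vl k xh := by
    have hb2 := abs_le.1 (hbd k yh)
    have hdiv : 0 ≤ Phi n a / ε := by positivity
    linarith [hSle]
  have hlamS : lam * S ≤ lam * vl k xh := mul_le_mul_of_nonneg_left hvkS hlam.le
  -- combine everything
  have hfinal : lam * S ≤ m * (τ * K) + (τ * L₀ + τ) := by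
    linarith [hsubineq, hsupineq, hBmono, hBdiff, hhamd, hlamS]
  have hcollect : m * (τ * K) + (τ * L₀ + τ) = τ * (m * K + L₀ + 1) := by ring
  rw [hcollect, hτdef] at hfinal
  have : lam * S / (2 * (m * K + L₀ + 1)) * (m * K + L₀ + 1) = lam * S / 2 := by
    field_simp
  rw [this] at hfinal
  nlinarith [hS0, hlam]

/-- Lower comparison: a supersolution of (P_lam) lies above v₀ - K. -/
lemma sup_lower (hm : 0 < m)
    {g : Fin m → Euc n × Ξ → Euc n} {L : Fin m → Euc n × Ξ → ℝ} (hgL : GoodData g L)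
    {B : Euc n → Matrix (Fin m) (Fin m) ℝ} (hB : GoodCoupling B)
    {lam : ℝ} (hlam : 0 < lam)
    {v₀ vl : Fin m → Euc n → ℝ}
    (hv₀c : ∀ i, Continuous (v₀ i)) (hv₀p : ∀ i, TorusFun (v₀ i))
    {L₀ : ℝ} (hL₀ : 0 ≤ L₀) (hlip : ∀ i (x y : Euc n), |v₀ i x - v₀ i y| ≤ L₀ * ‖x - y‖)
    {K : ℝ} (hK : 0 < K) (hbd : ∀ i x, |v₀ i x| ≤ K)
    (hv₀sub : IsSubsol B 0 g L (fun _ => 0) v₀)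
    (hvc : ∀ i, Continuous (vl i)) (hvp : ∀ i, TorusFun (vl i))
    (hvsuper : IsSupersol B lam g L (fun _ => 0) vl) :
    ∀ i x, v₀ i x - K ≤ vl i x := by
  obtain ⟨k₀, x₀, hmax₀⟩ := periodic_exists_max_fam hm (fun i x => v₀ i x - K - vl i x)
    (fun i => ((hv₀c i).sub continuous_const).sub (hvc i))
    (fun i x z hz => by simp [hvp i x z hz, hv₀p i x z hz])
  set S := v₀ k₀ x₀ - K - vl k₀ x₀ with hSdef
  rcases le_or_gt S 0 with hS0 | hS0
  · intro i x
    have := hmax₀ i x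
    linarith
  exfalso
  set τ := lam * S / (2 * (m * K + L₀ + 1)) with hτdef
  have hmK : (0:ℝ) < m * K + L₀ + 1 := by positivity
  have hτpos : 0 < τ := by positivity
  obtain ⟨δ, hδpos, hδ1, hUC⟩ := combined_UC hm hgL hB τ hτpos
  set ε := δ ^ 2 / K with hεdef
  have hεpos : 0 < ε := by positivity
  obtain ⟨k, xh, yh0, hmax⟩ := periodic_exists_max_fam2 hm
    (fun i x y => v₀ i x - K - vl i y - Phi n (x - y) / ε)
    (fun i => by
      refine Continuous.sub (Continuous.sub (Continuous.sub ?_ continuous_const) ?_) ?_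
      · exact (hv₀c i).comp continuous_fst
      · exact (hvc i).comp continuous_snd
      · exact (Continuous.div_const (contDiff_Phi.continuous.comp
          (continuous_fst.sub continuous_snd)) ε))
    (fun i x y z hz => by
      have h1 : x + z - y = (x - y) + z := by abel
      simp only [hv₀p i x z hz, h1, Phi_periodic (x - y) z hz])
    (fun i x y z hz => by
      have h1 : x - (y + z) = (x - y) + (-z) := by abel
      simp only [hvp i y z hz, h1, Phi_periodic (x - y) (-z) (isIntVec_neg hz)])
  obtain ⟨z, hz, hzcoord⟩ := exists_shift_half (xh - yh0)
  set yh := yh0 - z with hyhdef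
  have hxy : xh - yh = (xh - yh0) + z := by rw [hyhdef]; abel
  have hmax' : ∀ i x y, v₀ i x - K - vl i y - Phi n (x - y) / ε ≤
      v₀ k xh - K - vl k yh - Phi n (xh - yh) / ε := by
    intro i x y
    have e1 : vl k yh = vl k yh0 := by
      rw [hyhdef, sub_eq_add_neg]; exact hvp k yh0 (-z) (isIntVec_neg hz)
    have e2 : Phi n (xh - yh) = Phi n (xh - yh0) := by
      rw [hxy]; exact Phi_periodic (xh - yh0) z hz
    rw [e1, e2]; exact hmax i x y
  have hcoord : ∀ j, |(xh - yh) j| ≤ 1/2 := by rw [hxy]; exact hzcoord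
  set a := xh - yh with hadef
  have hPhia : 0 ≤ Phi n a := Phi_nonneg a
  have hSle : S ≤ v₀ k xh - K - vl k yh - Phi n a / ε := by
    have h1 := hmax' k₀ x₀ x₀
    rw [sub_self, Phi_zero] at h1
    have h2 : (0:ℝ)/ε = 0 := zero_div ε
    rw [h2] at h1
    rw [hSdef]
    linarith
  have hPhi2K : Phi n a ≤ 2 * K * ε := by
    have h1 := hmax' k yh yh
    rw [sub_self, Phi_zero] at h1
    have h2 : Phi n a / ε ≤ v₀ k xh - v₀ k yh := by
      have h3 : (0:ℝ) / ε = 0 := zero_div ε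
      rw [h3] at h1
      linarith
    have h3 : v₀ k xh - v₀ k yh ≤ 2 * K := by
      have hb1 := abs_le.1 (hbd k xh)
      have hb2 := abs_le.1 (hbd k yh)
      linarith [hb1.2, hb2.1]
    have h4 : Phi n a = (Phi n a / ε) * ε := by field_simp
    rw [h4]
    nlinarith
  have hnorma : ‖a‖ ≤ δ := by
    have h8 := Phi_ge a hcoord
    have h9 : 2 * K * ε = 2 * δ^2 := by rw [hεdef]; field_simp
    have h10 : ‖a‖^2 ≤ (δ/2)^2 := by nlinarith
    nlinarith [norm_nonneg a, hδpos]
  set p := (1/ε) • GPhi n a with hpdef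
  have hpnorm : ‖p‖ ≤ L₀ := by
    have hG : ‖GPhi n a‖ ≤ ε * L₀ := by
      refine gphi_bound_of_min hεpos hL₀ ?_
      intro e he t ht
      have h1 := hmax' k (xh + t • e) yh
      have h2 : xh + t • e - yh = a + t • e := by rw [hadef]; abel
      rw [h2] at h1
      have h7 : v₀ k (xh + t • e) - v₀ k xh ≤ (Phi n (a + t • e) - Phi n a) / ε := by
        rw [sub_div]
        linarith
      have h8 := hlip k (xh + t • e) xh
      have h5 : xh + t • e - xh = t • e := by abel
      have h6 : ‖t • e‖ = t := by
        rw [norm_smul, he, Real.norm_eq_abs, abs_of_pos ht, mul_one]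
      rw [h5, h6] at h8
      have h9 := (abs_le.1 h8).1
      linarith [h7]
    rw [hpdef, norm_smul, Real.norm_eq_abs, abs_of_pos (by positivity : (0:ℝ) < 1/ε)]
    calc (1/ε) * ‖GPhi n a‖ ≤ (1/ε) * (ε * L₀) := by
          exact mul_le_mul_of_nonneg_left hG (by positivity)
      _ = L₀ := by field_simp
  -- subsolution test for v₀ at xh
  set ψ₁ : Euc n → ℝ := fun x => Phi n (x - yh) / ε with hψ₁def
  have hψ₁c : ContDiff ℝ 1 ψ₁ :=
    (contDiff_Phi.comp (contDiff_id.sub contDiff_const)).div_const ε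
  have hψ₁p : TorusFun ψ₁ := by
    intro x z' hz'
    simp only [hψ₁def]
    have h1 : x + z' - yh = (x - yh) + z' := by abel
    rw [h1, Phi_periodic _ z' hz']
  have hψ₁grad : gradient ψ₁ xh = p := by
    have hd : HasDerivAt (fun s : ℝ => s / ε) (1/ε) (Phi n (xh - yh)) := by
      simpa using (hasDerivAt_id (Phi n (xh - yh))).div_const ε
    have hgr := hasGradientAt_comp_Phi yh xh hd
    exact hgr.gradient
  have hlocmax : IsLocalMax (fun x => v₀ k x - ψ₁ x) xh := by
    refine Filter.Eventually.of_forall fun x => ?_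
    have h1 := hmax' k x yh
    simp only [hψ₁def]
    rw [← hadef]
    linarith
  have hsubineq := hv₀sub.2 k ψ₁ hψ₁c hψ₁p xh hlocmax
  rw [hψ₁grad] at hsubineq
  simp only [zero_mul, zero_add] at hsubineq
  -- supersolution test for vl at yh
  set ψ₂ : Euc n → ℝ := fun y => -(Phi n (y - xh) / ε) with hψ₂def
  have hψ₂c : ContDiff ℝ 1 ψ₂ :=
    ((contDiff_Phi.comp (contDiff_id.sub contDiff_const)).div_const ε).neg
  have hψ₂p : TorusFun ψ₂ := by
    intro y z' hz'
    simp only [hψ₂def]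
    have h1 : y + z' - xh = (y - xh) + z' := by abel
    rw [h1, Phi_periodic _ z' hz']
  have hψ₂grad : gradient ψ₂ yh = p := by
    have hd : HasDerivAt (fun s : ℝ => -(s / ε)) (-(1/ε)) (Phi n (yh - xh)) := by
      exact ((hasDerivAt_id (Phi n (yh - xh))).div_const ε).neg
    have hgr := hasGradientAt_comp_Phi xh yh hd
    have h1 : yh - xh = -a := by rw [hadef]; abel
    rw [h1, GPhi_neg] at hgr
    have h2 : (-(1/ε)) • (-GPhi n a) = (1/ε) • GPhi n a := by
      rw [smul_neg, neg_smul, neg_neg]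
    rw [h2] at hgr
    exact hgr.gradient
  have hlocmin : IsLocalMin (fun y => vl k y - ψ₂ y) yh := by
    refine Filter.Eventually.of_forall fun y => ?_
    have h1 := hmax' k xh y
    simp only [hψ₂def]
    have e3 : ∀ w : Euc n, Phi n (w - xh) = Phi n (xh - w) := fun w => by
      rw [← Phi_neg (w - xh), neg_sub]
    rw [e3 y, e3 yh, ← hadef]
    linarith
  have hsupineq := hvsuper.2 k ψ₂ hψ₂c hψ₂p yh hlocmin
  rw [hψ₂grad] at hsupineq
  simp only [] at hsupineq
  -- monotonicity of B at yh
  have hmono := hB.2 yh (fun j => v₀ j xh - K - vl j yh - Phi n a / ε) k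
    (fun i => by linarith [hmax' i xh yh]) (by linarith)
  have hrho := rho_nonneg hB yh k
  have hKΦ : 0 ≤ K + Phi n a / ε := by positivity
  have hexpand : ∑ j, B yh k j * (v₀ j xh - K - vl j yh - Phi n a / ε) =
      (∑ j, B yh k j * v₀ j xh) - (∑ j, B yh k j * vl j yh) -
        (K + Phi n a / ε) * (∑ j, B yh k j) := by
    rw [Finset.sum_congr rfl (fun j _ => show
        B yh k j * (v₀ j xh - K - vl j yh - Phi n a / ε) =
        B yh k j * v₀ j xh - B yh k j * vl j yh - (K + Phi n a / ε) * B yh k j by ring)]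
    rw [Finset.sum_sub_distrib, Finset.sum_sub_distrib, Finset.mul_sum]
  rw [hexpand] at hmono
  have hBmono : (∑ j, B yh k j * vl j yh) ≤ ∑ j, B yh k j * v₀ j xh := by
    nlinarith [mul_nonneg hKΦ hrho]
  obtain ⟨hUB, hUg, hUL⟩ := hUC xh yh (by rw [← hadef]; exact hnorma)
  have hBdiff : (∑ j, B yh k j * v₀ j xh) - (∑ j, B xh k j * v₀ j xh) ≤ m * (τ * K) := by
    have hterm : ∀ j, (B yh k j - B xh k j) * v₀ j xh ≤ τ * K := by
      intro j
      have h1 := hUB k j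
      rw [abs_sub_comm] at h1
      have h2 := hbd j xh
      calc (B yh k j - B xh k j) * v₀ j xh ≤ |(B yh k j - B xh k j) * v₀ j xh| := le_abs_self _
        _ = |B yh k j - B xh k j| * |v₀ j xh| := abs_mul _ _
        _ ≤ τ * K := mul_le_mul h1 h2 (abs_nonneg _) hτpos.le
    calc (∑ j, B yh k j * v₀ j xh) - (∑ j, B xh k j * v₀ j xh)
        = ∑ j, (B yh k j - B xh k j) * v₀ j xh := by
          rw [← Finset.sum_sub_distrib]
          exact Finset.sum_congr rfl fun j _ => by ring
      _ ≤ ∑ _j : Fin m, τ * K := Finset.sum_le_sum fun j _ => hterm j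
      _ = m * (τ * K) := by
          rw [Finset.sum_const, Finset.card_univ, Fintype.card_fin, nsmul_eq_mul]
  have hhamd : ham g L k yh p ≤ ham g L k xh p + (τ * L₀ + τ) :=
    ham_sub_le (hgL.1 k).1 (hgL.2 k).1 hpnorm
      (fun ξ => by have h1 := hUg k ξ; rwa [norm_sub_rev] at h1)
      (fun ξ => by have h1 := hUL k ξ; rwa [abs_sub_comm] at h1)
  -- upper bound for vl k yh
  have hvkS : vl k yh ≤ -S := by
    have hb2 := abs_le.1 (hbd k xh)
    have hdiv : 0 ≤ Phi n a / ε := by positivity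
    linarith [hSle]
  have hlamS : lam * vl k yh ≤ lam * (-S) := mul_le_mul_of_nonneg_left hvkS hlam.le
  have hfinal : lam * S ≤ m * (τ * K) + (τ * L₀ + τ) := by
    nlinarith [hsubineq, hsupineq, hBmono, hBdiff, hhamd, hlamS]
  have hcollect : m * (τ * K) + (τ * L₀ + τ) = τ * (m * K + L₀ + 1) := by ring
  rw [hcollect, hτdef] at hfinal
  have : lam * S / (2 * (m * K + L₀ + 1)) * (m * K + L₀ + 1) = lam * S / 2 := by
    field_simp
  rw [this] at hfinal
  nlinarith [hS0, hlam]

lemma contDiff_psi (y : Euc n) (A δ : ℝ) (hδ : 0 < δ) :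
    ContDiff ℝ 1 (fun w : Euc n => A * (Real.sqrt (δ^2 + Phi n (w - y)) - δ)) := by
  refine contDiff_const.mul (ContDiff.sub ?_ contDiff_const)
  have hinner : ContDiff ℝ 1 (fun w : Euc n => δ^2 + Phi n (w - y)) :=
    contDiff_const.add (contDiff_Phi.comp (contDiff_id.sub contDiff_const))
  rw [contDiff_iff_contDiffAt]
  intro w
  have hpos : δ^2 + Phi n (w - y) ≠ 0 := by
    have := Phi_nonneg (w - y); positivity
  exact (Real.contDiffAt_sqrt hpos).comp w hinner.contDiffAt

/-- Core Lipschitz estimate for subsolutions, with constant independent of lam. -/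
lemma lipschitz_core (hm : 0 < m)
    {g : Fin m → Euc n × Ξ → Euc n} {L : Fin m → Euc n × Ξ → ℝ} (hgL : GoodData g L)
    (hcoer : Coercive g L)
    {B : Euc n → Matrix (Fin m) (Fin m) ℝ} (hB : GoodCoupling B)
    {C₀ : ℝ} (hC₀ : 0 < C₀) :
    ∃ C1 : ℝ, 0 < C1 ∧ ∀ lam : ℝ, 0 < lam → lam ≤ 1 →
      ∀ u : Fin m → Euc n → ℝ, (∀ i, Continuous (u i)) → (∀ i, TorusFun (u i)) →
      IsSubsol B lam g L (fun _ => 0) u → (∀ i x, |u i x| ≤ C₀) →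
      ∀ i (x y : Euc n), u i x - u i y ≤ C1 * ‖x - y‖ := by
  obtain ⟨BB, hBB0, hBbd⟩ := exists_B_bound hB
  set M := 1 + C₀ + m * BB * C₀ with hMdef
  choose R hR using fun i => hcoer i M
  have hne : (Finset.univ : Finset (Fin m)).Nonempty := ⟨⟨0, hm⟩, Finset.mem_univ _⟩
  set Rm := Finset.univ.sup' hne R with hRmdef
  set Q := max Rm 1 with hQdef
  have hQ1 : (1:ℝ) ≤ Q := le_max_right _ _
  have hQ0 : (0:ℝ) < Q := lt_of_lt_of_le one_pos hQ1
  set A := max (Real.sqrt 2 * Q / Real.pi) (4 * C₀) with hAdef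
  have hA0 : 0 < A := lt_of_lt_of_le (by positivity) (le_max_right _ _)
  refine ⟨A * Real.pi * Real.sqrt 2, by positivity, ?_⟩
  intro lam hlam hlam1 u huc hup hsub hubd i x y
  -- it suffices to prove u i x ≤ u i y + ρ + C1‖x-y‖ for all ρ > 0
  rw [sub_le_iff_le_add, add_comm]
  refine le_of_forall_pos_le_add ?_
  intro ρ hρ
  -- choose δ using continuity of u i at y
  obtain ⟨δ₀, hδ₀, hcont⟩ := Metric.continuous_iff.1 (huc i) y ρ hρ
  set δ := min (δ₀ / 2) (1/5) with hδdef
  have hδpos : 0 < δ := lt_min (by linarith) (by norm_num)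
  have hδ15 : δ ≤ 1/5 := min_le_right _ _
  -- the test function
  set ψ : Euc n → ℝ := fun w => A * (Real.sqrt (δ^2 + Phi n (w - y)) - δ) with hψdef
  have hsqrtpos : ∀ w : Euc n, 0 < δ^2 + Phi n (w - y) := fun w => by
    have := Phi_nonneg (w - y); positivity
  have hψc : Continuous ψ := by
    refine continuous_const.mul (Continuous.sub ?_ continuous_const)
    exact Real.continuous_sqrt.comp
      (continuous_const.add (contDiff_Phi.continuous.comp (continuous_id.sub continuous_const)))
  have hψp : TorusFun ψ := by
    intro w z hz
    simp only [hψdef]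
    have h1 : w + z - y = (w - y) + z := by abel
    rw [h1, Phi_periodic _ z hz]
  have hψnonneg : ∀ w, 0 ≤ ψ w := by
    intro w
    simp only [hψdef]
    have h1 : δ = Real.sqrt (δ^2) := (Real.sqrt_sq hδpos.le).symm
    have h2 : Real.sqrt (δ^2) ≤ Real.sqrt (δ^2 + Phi n (w - y)) :=
      Real.sqrt_le_sqrt (by linarith [Phi_nonneg (w - y)])
    nlinarith [h1 ▸ h2]
  have hψle : ∀ w : Euc n, ψ w ≤ A * Real.pi * Real.sqrt 2 * ‖w - y‖ := by
    intro w
    simp only [hψdef]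
    have hΦ0 := Phi_nonneg (w - y)
    set s := Real.sqrt (Phi n (w - y)) with hsdef
    have hs0 : 0 ≤ s := Real.sqrt_nonneg _
    have hs2 : s^2 = Phi n (w - y) := Real.sq_sqrt hΦ0
    have h1 : Real.sqrt (δ^2 + Phi n (w - y)) ≤ s + δ := by
      have h2 : δ^2 + Phi n (w - y) ≤ (s + δ)^2 := by nlinarith
      calc Real.sqrt (δ^2 + Phi n (w - y)) ≤ Real.sqrt ((s + δ)^2) := Real.sqrt_le_sqrt h2
        _ = s + δ := Real.sqrt_sq (by linarith)
    have h3 : s ≤ Real.pi * Real.sqrt 2 * ‖w - y‖ := by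
      have h4 : Phi n (w - y) ≤ (Real.pi * Real.sqrt 2 * ‖w - y‖)^2 := by
        have h5 : (Real.pi * Real.sqrt 2 * ‖w - y‖)^2 = 2 * Real.pi^2 * ‖w - y‖^2 := by
          have : (Real.sqrt 2)^2 = 2 := Real.sq_sqrt (by norm_num)
          nlinarith [this]
        rw [h5]
        exact Phi_le (w - y)
      calc s ≤ Real.sqrt ((Real.pi * Real.sqrt 2 * ‖w - y‖)^2) := Real.sqrt_le_sqrt h4
        _ = Real.pi * Real.sqrt 2 * ‖w - y‖ := Real.sqrt_sq (by positivity)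
    nlinarith
  -- maximize u i - ψ
  obtain ⟨xh, hxh⟩ := periodic_exists_max (fun w => u i w - ψ w)
    ((huc i).sub hψc) (fun w z hz => by simp [hup i w z hz, hψp w z hz])
  set Φh := Phi n (xh - y) with hΦhdef
  have hΦh0 : 0 ≤ Φh := Phi_nonneg _
  -- Case (b) is impossible
  have hcase : Φh ≤ δ^2 ∨ 1/2 < Φh := by
    by_contra hcon
    push_neg at hcon
    obtain ⟨hb1, hb2⟩ := hcon
    -- δ² < Φh ≤ 1/2 : contradiction with coercivity
    have hΦpos : δ^2 < Φh := hb1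
    have hΦ1 : Φh ≤ 1 := by linarith
    -- the gradient of ψ at xh
    set c := A * (1 / (2 * Real.sqrt (δ^2 + Φh))) with hcdef
    have hsq : (0:ℝ) < δ^2 + Φh := by positivity
    have hc0 : 0 < c := by
      rw [hcdef]
      have := Real.sqrt_pos.2 hsq
      positivity
    have hd : HasDerivAt (fun s : ℝ => A * (Real.sqrt (δ^2 + s) - δ)) c Φh := by
      have h1 : HasDerivAt (fun s : ℝ => δ^2 + s) 1 Φh := (hasDerivAt_id Φh).const_add (δ^2)
      have h2 : HasDerivAt Real.sqrt (1 / (2 * Real.sqrt (δ^2 + Φh))) (δ^2 + Φh) :=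
        Real.hasDerivAt_sqrt (ne_of_gt hsq)
      have h3 := (h2.comp Φh h1)
      have h4 := (h3.sub_const δ).const_mul A
      simpa [hcdef, Function.comp] using h4
    have hgr := hasGradientAt_comp_Phi y xh hd
    have hgrad : gradient ψ xh = c • GPhi n (xh - y) := hgr.gradient
    -- the gradient is large
    have hnormgrad : Q ≤ ‖c • GPhi n (xh - y)‖ := by
      have hG := GPhi_lower (xh - y) (by rw [← hΦhdef]; exact hΦ1)
      rw [← hΦhdef] at hG
      have hsΦ : 0 < Real.sqrt Φh := Real.sqrt_pos.2 (by nlinarith)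
      have hss : Real.sqrt (δ^2 + Φh) ≤ Real.sqrt 2 * Real.sqrt Φh := by
        rw [← Real.sqrt_mul (by norm_num : (0:ℝ) ≤ 2)]
        exact Real.sqrt_le_sqrt (by nlinarith)
      have hs2pos : 0 < Real.sqrt (δ^2 + Φh) := Real.sqrt_pos.2 hsq
      have hlow : A * Real.pi / Real.sqrt 2 ≤ c * ‖GPhi n (xh - y)‖ := by
        have h6 : c * ‖GPhi n (xh - y)‖ ≥ c * (2 * Real.pi * Real.sqrt Φh) :=
          mul_le_mul_of_nonneg_left hG hc0.le
        have h7 : c * (2 * Real.pi * Real.sqrt Φh) =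
            A * Real.pi * (Real.sqrt Φh / Real.sqrt (δ^2 + Φh)) := by
          rw [hcdef]; field_simp
        have h8 : Real.sqrt Φh / Real.sqrt (δ^2 + Φh) ≥ 1 / Real.sqrt 2 := by
          rw [ge_iff_le, div_le_div_iff₀ (by positivity) hs2pos]
          calc 1 * Real.sqrt (δ^2 + Φh) ≤ Real.sqrt 2 * Real.sqrt Φh := by
                rw [one_mul]; exact hss
            _ = Real.sqrt Φh * Real.sqrt 2 := by ring
        have hπ := Real.pi_pos
        calc A * Real.pi / Real.sqrt 2 = A * Real.pi * (1 / Real.sqrt 2) := by ring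
          _ ≤ A * Real.pi * (Real.sqrt Φh / Real.sqrt (δ^2 + Φh)) := by
              refine mul_le_mul_of_nonneg_left h8 (by positivity)
          _ = c * (2 * Real.pi * Real.sqrt Φh) := h7.symm
          _ ≤ c * ‖GPhi n (xh - y)‖ := h6
      have hAQ : Real.sqrt 2 * Q / Real.pi ≤ A := le_max_left _ _
      have hQA : Q ≤ A * Real.pi / Real.sqrt 2 := by
        rw [div_le_iff₀ Real.pi_pos] at hAQ
        rw [le_div_iff₀ (by positivity : (0:ℝ) < Real.sqrt 2)]
        nlinarith [Real.sqrt_pos.2 (by norm_num : (0:ℝ) < 2)]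
      rw [norm_smul, Real.norm_eq_abs, abs_of_pos hc0]
      linarith
    -- apply the subsolution property
    have hlocmax : IsLocalMax (fun w => u i w - ψ w) xh :=
      Filter.Eventually.of_forall fun w => hxh w
    have hsubineq := hsub.2 i ψ (contDiff_psi y A δ hδpos) hψp xh hlocmax
    rw [hgrad] at hsubineq
    simp only [] at hsubineq
    have hRiQ : R i ≤ Q := le_trans (Finset.le_sup' R (Finset.mem_univ i)) (le_max_left _ _)
    have hham : M ≤ ham g L i xh (c • GPhi n (xh - y)) :=
      hR i _ (le_trans hRiQ hnormgrad) xh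
    have h1 : -C₀ ≤ lam * u i xh := by
      have h1a := abs_le.1 (hubd i xh)
      nlinarith [h1a.1, h1a.2]
    have h2 : -(m * BB * C₀) ≤ ∑ j, B xh i j * u j xh := by
      have hterm : ∀ j, -(BB * C₀) ≤ B xh i j * u j xh := by
        intro j
        have habs : |B xh i j * u j xh| ≤ BB * C₀ := by
          rw [abs_mul]
          exact mul_le_mul (hBbd xh i j) (hubd j xh) (abs_nonneg _) hBB0
        linarith [neg_abs_le (B xh i j * u j xh)]
      calc -(m * BB * C₀) = ∑ _j : Fin m, -(BB * C₀) := by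
            rw [Finset.sum_const, Finset.card_univ, Fintype.card_fin, nsmul_eq_mul]; ring
        _ ≤ ∑ j, B xh i j * u j xh := Finset.sum_le_sum fun j _ => hterm j
    rw [hMdef] at hham
    linarith [hsubineq]
  -- in both remaining cases we get the estimate
  have hkey : u i x ≤ u i y + ρ + ψ x := by
    rcases hcase with hA1 | hC1
    · -- case (a): xh is close to y modulo ℤⁿ
      obtain ⟨z, hz, hzcoord⟩ := exists_shift_half (xh - y)
      have hPhiz : Phi n (xh - y + z) = Φh := by
        rw [hΦhdef]; exact Phi_periodic (xh - y) z hz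
      have hnear : ‖xh + z - y‖ ≤ δ := by
        have h8 := Phi_ge (xh - y + z) hzcoord
        have h9 : Phi n (xh - y + z) ≤ δ^2 := by rw [hPhiz]; exact hA1
        have h10 : ‖xh - y + z‖^2 ≤ δ^2 / 8 := by nlinarith
        have h11 : xh + z - y = xh - y + z := by abel
        rw [h11]
        nlinarith [norm_nonneg (xh - y + z), hδpos]
      have hu : u i (xh + z) = u i xh := hup i xh z hz
      have hux : u i xh ≤ u i y + ρ := by
        rw [← hu]
        have hd₀ : dist (xh + z) y < δ₀ := by
          rw [dist_eq_norm]
          have := min_le_left (δ₀ / 2) (1/5)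
          calc ‖xh + z - y‖ ≤ δ := hnear
            _ < δ₀ := by rw [hδdef]; exact lt_of_le_of_lt (min_le_left _ _) (by linarith)
        have := hcont (xh + z) hd₀
        rw [Real.dist_eq] at this
        linarith [(abs_le.1 this.le).1, (abs_le.1 this.le).2]
      have h12 := hxh x
      have hψxh := hψnonneg xh
      linarith
    · -- case (c): the test function is large at xh
      have hψxh : 2 * C₀ ≤ ψ xh := by
        simp only [hψdef]
        rw [← hΦhdef]
        have h1 : Real.sqrt (1/2) ≤ Real.sqrt (δ^2 + Φh) :=
          Real.sqrt_le_sqrt (by nlinarith)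
        have h2 : (7:ℝ)/10 ≤ Real.sqrt (1/2) := by
          rw [show (7:ℝ)/10 = Real.sqrt ((7/10)^2) by rw [Real.sqrt_sq (by norm_num)]]
          exact Real.sqrt_le_sqrt (by norm_num)
        have hA4 : 4 * C₀ ≤ A := le_max_right _ _
        nlinarith [hδ15]
      have h3 := hxh x
      have h4 := abs_le.1 (hubd i xh)
      have h5 := abs_le.1 (hubd i y)
      linarith [hρ.le, hψnonneg x]
  linarith [hψle x, hkey]

end Main

end Aux


theorem stmt15 {n m : ℕ} (hn : 0 < n) (hm : 0 < m)
    {Ξ : Type*} [MetricSpace Ξ] [CompactSpace Ξ] [Nonempty Ξ]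
    (g : Fin m → Euc n × Ξ → Euc n) (L : Fin m → Euc n × Ξ → ℝ)
    (hgL : GoodData g L) (hcoer : Coercive g L)
    (B : Euc n → Matrix (Fin m) (Fin m) ℝ) (hB : GoodCoupling B)
    (hE : AssumptionE B g L)
    (v : ℝ → Fin m → Euc n → ℝ)
    (hv : ∀ lam : ℝ, 0 < lam → IsSol B lam g L (fun _ => 0) (v lam)) :
    ∃ C1 : NNReal, 0 < C1 ∧ ∀ lam : ℝ, lam ∈ Set.Ioo (0:ℝ) 1 →
      ∀ i, LipschitzWith C1 (v lam i) := by
  obtain ⟨v₀, hv₀lip, hv₀sol⟩ := hE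
  have hv₀c : ∀ i, Continuous (v₀ i) := hv₀sol.1
  have hv₀p : ∀ i, TorusFun (v₀ i) := fun i => (hv₀sol.2.1.1 i).2
  choose Kl hKl using hv₀lip
  set L₀ : NNReal := ∑ i, Kl i with hL₀def
  have hlip : ∀ i (x y : Euc n), |v₀ i x - v₀ i y| ≤ (L₀:ℝ) * ‖x - y‖ := by
    intro i x y
    have h1 : LipschitzWith L₀ (v₀ i) := (hKl i).weaken
      (Finset.single_le_sum (f := Kl) (fun j _ => by simp) (Finset.mem_univ i))
    have h2 := h1.dist_le_mul x y
    rwa [Real.dist_eq, dist_eq_norm] at h2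
  have hL₀0 : (0:ℝ) ≤ (L₀:ℝ) := L₀.coe_nonneg
  obtain ⟨K₀, hK₀0, hK₀⟩ := exists_fam_bound v₀ hv₀c hv₀p
  set K := K₀ + 1 with hKdef
  have hK : 0 < K := by linarith
  have hbd : ∀ i x, |v₀ i x| ≤ K := fun i x => (hK₀ i x).trans (by linarith)
  set C₀ := 2 * K with hC₀def
  have hC₀ : 0 < C₀ := by linarith
  have hbound : ∀ lam : ℝ, 0 < lam → ∀ i x, |v lam i x| ≤ C₀ := by
    intro lam hlam i x
    have hsol := hv lam hlam
    have hvc : ∀ i, Continuous (v lam i) := hsol.1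
    have hvp : ∀ i, TorusFun (v lam i) := fun i => (hsol.2.1.1 i).2
    have hup := sup_upper hm hgL hB hlam hv₀c hv₀p hL₀0 hlip hK hbd
      hv₀sol.2.2 hvc hvp hsol.2.1 i x
    have hlow := sup_lower hm hgL hB hlam hv₀c hv₀p hL₀0 hlip hK hbd
      hv₀sol.2.1 hvc hvp hsol.2.2 i x
    have hb := abs_le.1 (hbd i x)
    rw [abs_le]
    constructor
    · linarith [hb.1]
    · linarith [hb.2]
  obtain ⟨C1, hC1pos, hcore⟩ := lipschitz_core hm hgL hcoer hB hC₀
  refine ⟨⟨C1, hC1pos.le⟩, ?_, ?_⟩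
  · exact_mod_cast hC1pos
  · intro lam hlam i
    refine LipschitzWith.of_dist_le_mul fun x y => ?_
    have hsol := hv lam hlam.1
    have hvc : ∀ i, Continuous (v lam i) := hsol.1
    have hvp : ∀ i, TorusFun (v lam i) := fun i => (hsol.2.1.1 i).2
    have h1 := hcore lam hlam.1 hlam.2.le (v lam) hvc hvp hsol.2.1
      (fun j w => hbound lam hlam.1 j w) i x y
    have h2 := hcore lam hlam.1 hlam.2.le (v lam) hvc hvp hsol.2.1
      (fun j w => hbound lam hlam.1 j w) i y x
    rw [Real.dist_eq, dist_eq_norm]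
    have h3 : ‖y - x‖ = ‖x - y‖ := norm_sub_rev _ _
    rw [h3] at h2
    show |v lam i x - v lam i y| ≤ C1 * ‖x - y‖
    rw [abs_le]
    constructor
    · linarith
    · linarith
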